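/- Let G be a k-regular connected non-bipartite vertex-transitive finite simple graph of even order admitting a partition V(G) = S ∪ S̄ with |S| = |S̄| + 2 and S̄ an independent set. Then 3 ≤ k ≤ 4. -/

import Mathlib

open SimpleGraph

variable {V : Type*}

/-- `G` has a perfect matching. -/
def HasPerfectMatching (G : SimpleGraph V) : Prop :=
  ∃ M : G.Subgraph, M.IsPerfectMatching

/-- `F` is a matching preclusion set of `G`. -/
def IsMPSet (G : SimpleGraph V) (F : Finset (Sym2 V)) : Prop :=
  ↑F ⊆ G.edgeSet ∧ ¬ HasPerfectMatching (G.deleteEdges ↑F)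

/-- The matching preclusion number of `G`. -/
noncomputable def mpNumber (G : SimpleGraph V) : ℕ :=
  sInf {n | ∃ F : Finset (Sym2 V), IsMPSet G F ∧ F.card = n}

/-- `G` is `k`-regular. -/
def GIsRegular (G : SimpleGraph V) (k : ℕ) : Prop :=
  ∀ v : V, (G.neighborSet v).ncard = k

/-- `G` is vertex-transitive. -/
def VertexTransitive (G : SimpleGraph V) : Prop :=
  ∀ x y : V, ∃ φ : G ≃g G, φ x = y

/-- The minimum degree of `G`. -/
noncomputable def minDeg (G : SimpleGraph V) : ℕ :=
  sInf {d | ∃ v : V, (G.neighborSet v).ncard = d}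

section MPAux
open Finset

lemma exists_odd_closed_walk {V : Type*} (G : SimpleGraph V) (hconn : G.Connected)
    (hnb : ¬ G.Colorable 2) : ∃ (v : V) (w : G.Walk v v), Odd w.length := by
  by_contra h
  push_neg at h
  obtain ⟨r⟩ := hconn.nonempty
  have hw : ∀ v : V, Nonempty (G.Walk r v) := fun v => hconn r v
  apply hnb
  refine ⟨SimpleGraph.Coloring.mk (fun v => ⟨(hw v).some.length % 2, by omega⟩) ?_⟩
  intro a b hab hcol
  have hpar : (hw a).some.length % 2 = (hw b).some.length % 2 := by
    simpa [Fin.ext_iff] using hcol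
  have hodd : Odd (((hw a).some.concat hab).append (hw b).some.reverse).length := by
    rw [SimpleGraph.Walk.length_append, SimpleGraph.Walk.length_concat,
      SimpleGraph.Walk.length_reverse]
    rw [Nat.odd_iff]
    omega
  exact h r _ hodd


section Cycle
variable {V : Type*} {G : SimpleGraph V} {g : ℕ} {c : ℕ → V}

lemma harc (hc : ∀ i, G.Adj (c i) (c (i+1))) (i d : ℕ) :
    ∃ p : G.Walk (c i) (c (i+d)), p.length = d := by
  induction d with
  | zero => exact ⟨Walk.nil, rfl⟩
  | succ d ih =>
    obtain ⟨p, hp⟩ := ih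
    exact ⟨(p.concat (hc (i+d))).copy rfl (by ring_nf), by
      rw [Walk.length_copy, Walk.length_concat, hp]⟩

lemma hclosed (hc : ∀ i, G.Adj (c i) (c (i+1)))
    (hmin : ∀ (v : V) (w : G.Walk v v), Odd w.length → g ≤ w.length)
    (i d : ℕ) (heq : c (i+d) = c i) (hd : Odd d) : g ≤ d := by
  obtain ⟨p, hp⟩ := harc hc i d
  have := hmin (c i) (p.copy rfl heq) (by rw [Walk.length_copy, hp]; exact hd)
  rwa [Walk.length_copy, hp] at this

lemma hinj (hc : ∀ i, G.Adj (c i) (c (i+1)))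
    (hmin : ∀ (v : V) (w : G.Walk v v), Odd w.length → g ≤ w.length)
    (hper : ∀ i, c (i + g) = c i) (hgodd : Odd g)
    (i j : ℕ) (hij : i ≤ j) (hjg : j ≤ i + g) (heq : c i = c j) : i = j ∨ j = i + g := by
  rcases Nat.even_or_odd (j - i) with he | ho
  · have hoe : Odd (i + g - j) := by
      rcases hgodd with ⟨m, hm⟩; rcases he with ⟨l, hl⟩
      rw [Nat.odd_iff]; omega
    have : g ≤ i + g - j := by
      apply hclosed hc hmin j (i + g - j) _ hoe
      rw [show j + (i + g - j) = i + g by omega, hper i, heq]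
    left; omega
  · have : g ≤ j - i := hclosed hc hmin i (j-i)
      (by rw [Nat.add_sub_cancel' hij]; exact heq.symm) ho
    right; omega

/-- two neighbours on a minimal odd cycle are at index-distance 0, 2, or ≥ g-2 (mod window) -/
lemma hpair (hc : ∀ i, G.Adj (c i) (c (i+1)))
    (hmin : ∀ (v : V) (w : G.Walk v v), Odd w.length → g ≤ w.length)
    (hper : ∀ i, c (i + g) = c i) (hgodd : Odd g) (hg5 : 5 ≤ g)
    {x : V} {i j : ℕ} (hij : i < j) (hjg : j < i + g)
    (hxi : G.Adj x (c i)) (hxj : G.Adj x (c j)) : j - i = 2 ∨ j - i = g - 2 := by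
  rcases Nat.even_or_odd (j - i) with he | ho
  · -- even: closed walk x → c j → ... → c (i+g)=c i → x of odd length (i+g-j)+2
    obtain ⟨p, hp⟩ := harc hc j (i + g - j)
    have hEq : c (j + (i + g - j)) = c i := by
      rw [show j + (i + g - j) = i + g by omega, hper i]
    have hW := hmin x ((Walk.cons hxj (p.copy rfl hEq)).concat hxi.symm)
    rw [Walk.length_concat, Walk.length_cons, Walk.length_copy, hp] at hW
    rcases hgodd with ⟨m, hm⟩; rcases he with ⟨l, hl⟩
    have : g ≤ i + g - j + 1 + 1 := by
      apply hW
      rw [Nat.odd_iff]; omega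
    left; omega
  · -- odd: closed walk x → c i → ... → c j → x of odd length (j-i)+2
    obtain ⟨p, hp⟩ := harc hc i (j - i)
    have hEq : c (i + (j - i)) = c j := by rw [Nat.add_sub_cancel' hij.le]
    have hW := hmin x ((Walk.cons hxi (p.copy rfl hEq)).concat hxj.symm)
    rw [Walk.length_concat, Walk.length_cons, Walk.length_copy, hp] at hW
    have : g ≤ j - i + 1 + 1 := by
      apply hW
      rcases ho with ⟨l, hl⟩; rw [Nat.odd_iff]; omega
    right
    rcases hgodd with ⟨m, hm⟩; rcases ho with ⟨l, hl⟩
    omega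
end Cycle


lemma mk_cyc {V : Type*} (G : SimpleGraph V) (v0 : V) (w : G.Walk v0 v0) (g : ℕ)
    (hwlen : w.length = g) (hg0 : 1 < g) :
    ∃ c : ℕ → V, (∀ i, G.Adj (c i) (c (i+1))) ∧ (∀ i, c (i + g) = c i)
      ∧ (∀ j, c (j % g) = c j) := by
  refine ⟨fun i => w.getVert (i % g), ?_, ?_, ?_⟩
  · intro i
    show G.Adj (w.getVert (i % g)) (w.getVert ((i+1) % g))
    have hj : i % g < g := Nat.mod_lt _ (by omega)
    have ham := Nat.add_mod i 1 g
    have h1 : 1 % g = 1 := Nat.mod_eq_of_lt hg0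
    rcases Nat.lt_or_ge (i % g + 1) g with h | h
    · have h2 : (i+1) % g = i % g + 1 := by rw [ham, h1]; exact Nat.mod_eq_of_lt h
      rw [h2]
      exact w.adj_getVert_succ (by omega)
    · have hjg : i % g + 1 = g := by omega
      have h2 : (i+1) % g = 0 := by rw [ham, h1, hjg]; exact Nat.mod_self g
      rw [h2]
      have := w.adj_getVert_succ (i := i % g) (by omega)
      have h3 : w.getVert g = w.getVert 0 := by rw [w.getVert_zero, ← hwlen, w.getVert_length]
      rwa [hjg, h3] at this
  · intro i; simp [Nat.add_mod_right]
  · intro j; simp [Nat.mod_mod_of_dvd]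


lemma avg_bound {V : Type*} [Fintype V] {G : SimpleGraph V}
    (hvt : ∀ x y : V, ∃ φ : G ≃g G, φ x = y)
    (S : Set V) (hind : ∀ a ∈ Sᶜ, ∀ b ∈ Sᶜ, ¬ G.Adj a b)
    {g : ℕ} {c : ℕ → V} (hc : ∀ i, G.Adj (c i) (c (i+1)))
    (hcmod : ∀ j, c (j % g) = c j) (hg0 : 0 < g) :
    Sᶜ.ncard * g ≤ Fintype.card V * (g / 2) := by
  classical
  set n := Fintype.card V with hn
  set Γ : Finset (Equiv.Perm V) :=
    Finset.univ.filter (fun π => ∀ a b : V, G.Adj (π a) (π b) ↔ G.Adj a b) with hΓdef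
  have hmemΓ : ∀ π : Equiv.Perm V, π ∈ Γ ↔ ∀ a b : V, G.Adj (π a) (π b) ↔ G.Adj a b := by
    intro π; simp [hΓdef]
  have hΓex : ∀ x y : V, ∃ π ∈ Γ, π x = y := by
    intro x y
    obtain ⟨φ, hφ⟩ := hvt x y
    exact ⟨φ.toEquiv, (hmemΓ _).2 (fun a b => φ.map_adj_iff), hφ⟩
  -- fibers over values all have the same cardinality
  have hfib : ∀ (vv u u' : V),
      (Γ.filter (fun π => π vv = u)).card = (Γ.filter (fun π => π vv = u')).card := by
    intro vv u u'
    obtain ⟨τ, hτΓ, hτ⟩ := hΓex u u'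
    have hτ' := (hmemΓ τ).1 hτΓ
    apply Finset.card_nbij' (i := fun π => π.trans τ) (j := fun π => π.trans τ.symm)
    · intro π hπ
      rw [Finset.mem_coe, Finset.mem_filter] at hπ ⊢
      have hπ' := (hmemΓ π).1 hπ.1
      refine ⟨(hmemΓ _).2 (fun a b => ?_), by simp [hπ.2, hτ]⟩
      simp [hτ' (π a) (π b), hπ' a b]
    · intro π hπ
      rw [Finset.mem_coe, Finset.mem_filter] at hπ ⊢
      have hπ' := (hmemΓ π).1 hπ.1
      refine ⟨(hmemΓ _).2 (fun a b => ?_), ?_⟩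
      · simp only [Equiv.trans_apply]
        rw [← hτ' (τ.symm (π a)) (τ.symm (π b))]
        simp [hπ' a b]
      · simp [Equiv.symm_apply_eq, ← hτ, hπ.2]
    · intro π _; ext x; simp
    · intro π _; ext x; simp
  -- all fibers have the same cardinality m, and Γ.card = n * m
  set m := (Γ.filter (fun π => π (c 0) = c 0)).card with hm
  have hsum : ∀ vv : V, Γ.card = ∑ u : V, (Γ.filter (fun π => π vv = u)).card :=
    fun vv => Finset.card_eq_sum_card_fiberwise (fun π _ => Finset.mem_univ (π vv))
  have hcardΓ : ∀ vv u : V, Γ.card = n * (Γ.filter (fun π => π vv = u)).card := by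
    intro vv u
    rw [hsum vv, Finset.sum_congr rfl (fun u' _ => hfib vv u' u)]
    simp [hn, mul_comm]
  have hnV : Nonempty V := ⟨c 0⟩
  have hn0 : 0 < n := Fintype.card_pos
  have hmall : ∀ vv u : V, (Γ.filter (fun π => π vv = u)).card = m := by
    intro vv u
    exact Nat.eq_of_mul_eq_mul_left hn0 ((hcardΓ vv u).symm.trans (hcardΓ (c 0) (c 0)))
  have hm1 : 1 ≤ m := by
    rw [← hmall (c 0) (c 0)]
    refine Finset.card_pos.2 ⟨Equiv.refl V, ?_⟩
    rw [Finset.mem_filter]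
    exact ⟨(hmemΓ _).2 (fun a b => Iff.rfl), rfl⟩
  have hmod1 : ∀ a : ℕ, a < g → (a+1) % g = if a + 1 = g then 0 else a + 1 := by
    intro a ha; split
    · next h => rw [h, Nat.mod_self]
    · next h => exact Nat.mod_eq_of_lt (by omega)
  -- per-automorphism cyclic bound
  have key : ∀ π ∈ Γ, ((Finset.range g).filter (fun i => π (c i) ∈ Sᶜ)).card ≤ g / 2 := by
    intro π hπΓ
    have hπ' := (hmemΓ π).1 hπΓ
    set J := (Finset.range g).filter (fun i => π (c i) ∈ Sᶜ) with hJ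
    set K := (Finset.range g).filter (fun i => ¬ π (c i) ∈ Sᶜ) with hK
    have hJK : J.card + K.card = g := by
      rw [hJ, hK, Finset.card_filter_add_card_filter_not]
      exact Finset.card_range g
    have hmapsto : ∀ i ∈ J, (i+1) % g ∈ K := by
      intro i hi
      rw [hJ, Finset.mem_filter, Finset.mem_range] at hi
      rw [hK, Finset.mem_filter, Finset.mem_range]
      refine ⟨Nat.mod_lt _ hg0, fun hmem => ?_⟩
      have hadj : G.Adj (π (c i)) (π (c ((i+1) % g))) := by
        rw [hcmod (i+1)]
        exact (hπ' _ _).2 (hc i)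
      exact hind _ hi.2 _ hmem hadj
    have hJle : J.card ≤ K.card := by
      apply Finset.card_le_card_of_injOn (fun i => (i+1) % g) hmapsto
      intro a ha b hb hab
      simp only [Finset.coe_filter, Set.mem_setOf_eq, Finset.mem_range, hJ] at ha hb
      simp only at hab
      rw [hmod1 a ha.1, hmod1 b hb.1] at hab
      split at hab <;> split at hab <;> omega
    omega
  -- exchange the double counting
  have exch : ∑ π ∈ Γ, ((Finset.range g).filter (fun i => π (c i) ∈ Sᶜ)).card
      = g * (Sᶜ.ncard * m) := by
    have e1 : ∀ π ∈ Γ, ((Finset.range g).filter (fun i => π (c i) ∈ Sᶜ)).card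
        = ∑ i ∈ Finset.range g, if π (c i) ∈ Sᶜ then 1 else 0 := by
      intro π _; rw [Finset.card_filter]
    rw [Finset.sum_congr rfl e1, Finset.sum_comm]
    have e2 : ∀ i ∈ Finset.range g,
        (∑ π ∈ Γ, if π (c i) ∈ Sᶜ then 1 else 0) = Sᶜ.ncard * m := by
      intro i _
      rw [← Finset.card_filter]
      have e3 : (Γ.filter (fun π => π (c i) ∈ Sᶜ)).card
          = ∑ u ∈ Sᶜ.toFinset, ((Γ.filter (fun π => π (c i) ∈ Sᶜ)).filter
              (fun π => π (c i) = u)).card := by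
        apply Finset.card_eq_sum_card_fiberwise
        intro π hπ
        rw [Finset.mem_coe, Finset.mem_filter] at hπ
        exact Finset.mem_coe.2 (Set.mem_toFinset.2 hπ.2)
      rw [e3]
      have e4 : ∀ u ∈ Sᶜ.toFinset, ((Γ.filter (fun π => π (c i) ∈ Sᶜ)).filter
          (fun π => π (c i) = u)).card = m := by
        intro u hu
        rw [Finset.filter_filter]
        rw [show (Γ.filter fun π => π (c i) ∈ Sᶜ ∧ π (c i) = u)
            = Γ.filter (fun π => π (c i) = u) from Finset.filter_congr (fun π _ => by
          constructor
          · exact fun h => h.2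
          · exact fun h => ⟨h ▸ Set.mem_toFinset.1 hu, h⟩)]
        exact hmall (c i) u
      rw [Finset.sum_congr rfl e4, Finset.sum_const, smul_eq_mul,
        ← Set.ncard_eq_toFinset_card']
    rw [Finset.sum_congr rfl e2, Finset.sum_const, smul_eq_mul, Finset.card_range]
  have hΓcard : Γ.card = n * m := hcardΓ (c 0) (c 0)
  have final : g * (Sᶜ.ncard * m) ≤ (n * m) * (g / 2) := by
    rw [← exch, ← hΓcard]
    calc ∑ π ∈ Γ, ((Finset.range g).filter (fun i => π (c i) ∈ Sᶜ)).card
        ≤ ∑ _π ∈ Γ, g / 2 := Finset.sum_le_sum key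
      _ = Γ.card * (g / 2) := by rw [Finset.sum_const, smul_eq_mul]
  have final2 : (Sᶜ.ncard * g) * m ≤ (n * (g / 2)) * m := by
    calc (Sᶜ.ncard * g) * m = g * (Sᶜ.ncard * m) := by ring
      _ ≤ (n * m) * (g / 2) := final
      _ = (n * (g / 2)) * m := by ring
  exact Nat.le_of_mul_le_mul_right final2 hm1

end MPAux

open Finset in
theorem stmt7 [Fintype V] (G : SimpleGraph V) (k : ℕ)
    (hreg : GIsRegular G k) (hconn : G.Connected)
    (hvt : VertexTransitive G) (hnb : ¬ G.Colorable 2)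
    (heven : Even (Fintype.card V)) (S : Set V)
    (hind : ∀ a ∈ Sᶜ, ∀ b ∈ Sᶜ, ¬ G.Adj a b)
    (hcard : S.ncard = Sᶜ.ncard + 2) :
    3 ≤ k ∧ k ≤ 4 := by
  classical
  set n := Fintype.card V with hndef
  have hSc : S.ncard + Sᶜ.ncard = n := by
    rw [hndef, ← Nat.card_eq_fintype_card]
    exact Set.ncard_add_ncard_compl S
  obtain ⟨v1, w1, hodd1⟩ := exists_odd_closed_walk G hconn hnb
  set OS : Set ℕ := {L | Odd L ∧ ∃ (v : V) (w : G.Walk v v), w.length = L} with hOS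
  have hOSne : OS.Nonempty := ⟨w1.length, hodd1, v1, w1, rfl⟩
  set g := sInf OS with hgdef
  obtain ⟨hgodd, v0, w, hwlen⟩ : g ∈ OS := Nat.sInf_mem hOSne
  have hmin : ∀ (v : V) (ww : G.Walk v v), Odd ww.length → g ≤ ww.length :=
    fun v ww h => Nat.sInf_le ⟨h, v, ww, rfl⟩
  have hg3 : 3 ≤ g := by
    have hg1 : g ≠ 1 := by
      intro h
      exact G.loopless.irrefl v0 (w.adj_of_length_eq_one (hwlen.trans h))
    rcases hgodd with ⟨t, ht⟩; rcases Nat.eq_zero_or_pos t with h|h <;> omega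
  obtain ⟨c, hc, hper, hcmod⟩ := mk_cyc G v0 w g hwlen (by omega)
  -- n ≤ 2g via averaging
  have havg := avg_bound hvt S hind hc hcmod (by omega)
  have hn2g : n ≤ 2 * g := by
    rcases hgodd with ⟨t, ht⟩
    have ht2 : g / 2 = t := by omega
    rw [ht2, ht] at havg
    have hns : n = 2 * Sᶜ.ncard + 2 := by omega
    nlinarith [havg, hns]
  -- injectivity of c on [0,g)
  have hinjw : ∀ i j, i < g → j < g → c i = c j → i = j := by
    intro i j hi hj heq
    rcases le_total i j with h | h
    · rcases hinj hc hmin hper hgodd i j h (by omega) heq with h'|h' <;> omega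
    · rcases hinj hc hmin hper hgodd j i h (by omega) heq.symm with h'|h' <;> omega
  set T : Finset V := (Finset.range g).image c with hT
  have hTcard : T.card = g := by
    rw [hT, Finset.card_image_of_injOn, Finset.card_range]
    intro i hi j hj
    exact hinjw i j (Finset.mem_range.1 hi) (Finset.mem_range.1 hj)
  have hmemT : ∀ i, c i ∈ T := by
    intro i
    rw [hT, Finset.mem_image]
    exact ⟨i % g, Finset.mem_range.2 (Nat.mod_lt _ (by omega)), hcmod i⟩
  -- k ≥ 2
  have hk2 : 2 ≤ k := by
    have hadjg : G.Adj (c 0) (c (g-1)) := by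
      have h := hc (g-1)
      rw [show g - 1 + 1 = 0 + g from by omega, hper 0] at h
      exact h.symm
    have hne : c 1 ≠ c (g-1) := fun h => by
      have := hinjw 1 (g-1) (by omega) (by omega) h; omega
    have hsub : ({c 1, c (g-1)} : Set V) ⊆ G.neighborSet (c 0) := by
      intro x hx
      rcases hx with h | h
      · subst h; exact hc 0
      · simp only [Set.mem_singleton_iff] at h; subst h; exact hadjg
    calc 2 = ({c 1, c (g-1)} : Set V).ncard := (Set.ncard_pair hne).symm
      _ ≤ (G.neighborSet (c 0)).ncard := Set.ncard_le_ncard hsub (Set.toFinite _)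
      _ = k := hreg (c 0)
  -- k ≠ 2
  have hk2' : k ≠ 2 := by
    intro hk
    have hclosure : ∀ i, ∀ x, G.Adj (c i) x → x ∈ T := by
      intro i x hadj
      have h2 : G.Adj (c i) (c (i+g-1)) := by
        have h := hc (i+g-1)
        rw [show i+g-1+1 = i+g from by omega, hper i] at h
        exact h.symm
      have hne : c (i+1) ≠ c (i+g-1) := fun h => by
        rcases hinj hc hmin hper hgodd (i+1) (i+g-1) (by omega) (by omega) h with h'|h' <;> omega
      have hpairsub : ({c (i+1), c (i+g-1)} : Set V) ⊆ G.neighborSet (c i) := by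
        intro y hy
        rcases hy with h | h
        · subst h; exact hc i
        · simp only [Set.mem_singleton_iff] at h; subst h; exact h2
      have heqN : ({c (i+1), c (i+g-1)} : Set V) = G.neighborSet (c i) := by
        apply Set.eq_of_subset_of_ncard_le hpairsub _ (Set.toFinite _)
        rw [hreg, hk, Set.ncard_pair hne]
      have hx : x ∈ ({c (i+1), c (i+g-1)} : Set V) := by rw [heqN]; exact hadj
      rcases hx with h | h
      · rw [show x = c (i+1) from h]; exact hmemT (i+1)
      · simp only [Set.mem_singleton_iff] at h
        rw [show x = c (i+g-1) from h]; exact hmemT (i+g-1)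
    have hstep : ∀ (y z : V) (p : G.Walk y z), y ∈ T → z ∈ T := by
      intro y z p
      induction p with
      | nil => exact id
      | cons h q ih =>
        intro hy
        apply ih
        rw [hT, Finset.mem_image] at hy
        obtain ⟨i, _, hi⟩ := hy
        exact hclosure i _ (hi ▸ h)
    have hall : ∀ x : V, x ∈ T := by
      intro x
      obtain ⟨p⟩ := hconn.preconnected (c 0) x
      exact hstep _ _ p (hmemT 0)
    have hng : n = g := by
      have h1 : Finset.univ ⊆ T := fun x _ => hall x
      have h2 : n ≤ g := by
        rw [hndef, ← hTcard, ← Finset.card_univ]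
        exact Finset.card_le_card h1
      have h3 : g ≤ n := by
        rw [hndef, ← hTcard]
        exact Finset.card_le_univ T
      omega
    rcases hgodd with ⟨t, ht⟩
    rcases heven with ⟨e, he⟩
    omega
  -- k ≤ 4
  have hdegx : ∀ x : V, (Finset.univ.filter (fun u => G.Adj x u)).card = k := by
    intro x
    have hEq : G.neighborSet x = ↑(Finset.univ.filter (fun u => G.Adj x u)) := by
      ext u; simp [mem_neighborSet]
    have h := hreg x
    rwa [hEq, Set.ncard_coe_finset] at h
  have hk4 : k ≤ 4 := by
    rcases Nat.lt_or_ge g 5 with hg5 | hg5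
    · -- g = 3, so n ≤ 6
      have hg3' : g = 3 := by rcases hgodd with ⟨t, ht⟩; omega
      have hn6 : n ≤ 6 := by omega
      have hcompl1 : ∀ x : V, (({x} : Set V)ᶜ).ncard = n - 1 := by
        intro x
        have h := Set.ncard_add_ncard_compl ({x} : Set V)
        rw [Set.ncard_singleton, Nat.card_eq_fintype_card, ← hndef] at h
        omega
      have hkn : k + 1 ≤ n := by
        have hsub : G.neighborSet (c 0) ⊆ ({c 0} : Set V)ᶜ := by
          intro x hx
          simp only [Set.mem_compl_iff, Set.mem_singleton_iff]
          intro h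
          exact G.loopless.irrefl _ (h ▸ hx)
        have h := Set.ncard_le_ncard hsub (Set.toFinite _)
        rw [hreg, hcompl1] at h
        have hn1 : 1 ≤ n := by
          have : (c 0) ∈ (Finset.univ : Finset V) := Finset.mem_univ _
          have := Finset.card_pos.2 ⟨c 0, this⟩
          rw [Finset.card_univ] at this; omega
        omega
      by_contra hk5
      push_neg at hk5
      have hcomplete : ∀ x y : V, x ≠ y → G.Adj x y := by
        intro x y hxy
        have hsub : G.neighborSet x ⊆ ({x} : Set V)ᶜ := by
          intro z hz
          simp only [Set.mem_compl_iff, Set.mem_singleton_iff]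
          intro h
          exact G.loopless.irrefl _ (h ▸ hz)
        have heqN : G.neighborSet x = ({x} : Set V)ᶜ := by
          apply Set.eq_of_subset_of_ncard_le hsub _ (Set.toFinite _)
          rw [hreg, hcompl1]
          omega
        have : y ∈ G.neighborSet x := by
          rw [heqN]
          simp [hxy.symm]
        exact this
      have hs2 : 1 < Sᶜ.ncard := by omega
      obtain ⟨a, b, ha, hb, hab⟩ := (Set.one_lt_ncard_iff (Set.toFinite _)).1 hs2
      exact hind a ha b hb (hcomplete a b hab)
    · -- g ≥ 5 : the main count
      have hdeg2 : ∀ x : V, (T.filter (fun u => G.Adj x u)).card ≤ 2 := by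
        intro x
        set J := (Finset.range g).filter (fun i => G.Adj x (c i)) with hJ
        have hcardeq : (T.filter (fun u => G.Adj x u)).card = J.card := by
          rw [hT, Finset.filter_image]
          apply Finset.card_image_of_injOn
          intro i hi j hj
          rw [Finset.coe_filter, Set.mem_setOf_eq, Finset.mem_range] at hi hj
          exact hinjw i j hi.1 hj.1
        rw [hcardeq]
        by_contra hJ3
        push_neg at hJ3
        have hJmem : ∀ i ∈ J, i < g ∧ G.Adj x (c i) := by
          intro i hi
          rw [hJ, Finset.mem_filter, Finset.mem_range] at hi
          exact hi
        have hJne : J.Nonempty := Finset.card_pos.1 (by omega)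
        set i1 := J.min' hJne with hi1
        set i3 := J.max' hJne with hi3
        have h13 : i1 < i3 := J.min'_lt_max'_of_card (by omega)
        have hne' : ((J.erase i1).erase i3).Nonempty := by
          apply Finset.card_pos.1
          have e1 : (J.erase i1).card = J.card - 1 := Finset.card_erase_of_mem (J.min'_mem hJne)
          have e2 : ((J.erase i1).erase i3).card = (J.erase i1).card - 1 :=
            Finset.card_erase_of_mem (Finset.mem_erase.2 ⟨by omega, J.max'_mem hJne⟩)
          omega
        obtain ⟨i2, hi2⟩ := hne'
        rw [Finset.mem_erase, Finset.mem_erase] at hi2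
        obtain ⟨hne3, hne1, hi2J⟩ := hi2
        have h12 : i1 < i2 := lt_of_le_of_ne (J.min'_le i2 hi2J) (Ne.symm hne1)
        have h23 : i2 < i3 := lt_of_le_of_ne (J.le_max' i2 hi2J) hne3
        obtain ⟨hlt1, hadj1⟩ := hJmem i1 (J.min'_mem hJne)
        obtain ⟨hlt2, hadj2⟩ := hJmem i2 hi2J
        obtain ⟨hlt3, hadj3⟩ := hJmem i3 (J.max'_mem hJne)
        have d12 := hpair hc hmin hper hgodd hg5 h12 (by omega) hadj1 hadj2
        have d23 := hpair hc hmin hper hgodd hg5 h23 (by omega) hadj2 hadj3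
        have d13 := hpair hc hmin hper hgodd hg5 (h12.trans h23) (by omega) hadj1 hadj3
        rcases hgodd with ⟨t, ht⟩
        rcases d12 with h|h <;> rcases d23 with h'|h' <;> rcases d13 with h''|h'' <;> omega
      have hsplitdeg : ∀ x ∈ T, k - 2 ≤ ((Finset.univ \ T).filter (fun u => G.Adj x u)).card := by
        intro x _
        have hU : Finset.univ.filter (fun u => G.Adj x u)
            = T.filter (fun u => G.Adj x u) ∪ (Finset.univ \ T).filter (fun u => G.Adj x u) := by
          rw [← Finset.filter_union, Finset.union_sdiff_of_subset (Finset.subset_univ T)]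
        have hdisj : Disjoint (T.filter (fun u => G.Adj x u))
            ((Finset.univ \ T).filter (fun u => G.Adj x u)) :=
          Finset.disjoint_filter_filter Finset.disjoint_sdiff
        have h := hdegx x
        rw [hU, Finset.card_union_of_disjoint hdisj] at h
        have := hdeg2 x
        omega
      have hsum1 : g * (k - 2) ≤ ∑ x ∈ T, ((Finset.univ \ T).filter (fun u => G.Adj x u)).card := by
        calc g * (k-2) = ∑ _x ∈ T, (k-2) := by rw [Finset.sum_const, smul_eq_mul, hTcard]
          _ ≤ _ := Finset.sum_le_sum hsplitdeg
      have hswap : ∑ x ∈ T, ((Finset.univ \ T).filter (fun u => G.Adj x u)).card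
          = ∑ u ∈ Finset.univ \ T, (T.filter (fun x => G.Adj u x)).card := by
        have e1 : ∀ x ∈ T, ((Finset.univ \ T).filter (fun u => G.Adj x u)).card
            = ∑ u ∈ Finset.univ \ T, if G.Adj x u then 1 else 0 := fun x _ => Finset.card_filter _ _
        have e2 : ∀ u ∈ Finset.univ \ T, (T.filter (fun x => G.Adj u x)).card
            = ∑ x ∈ T, if G.Adj u x then 1 else 0 := fun u _ => Finset.card_filter _ _
        rw [Finset.sum_congr rfl e1, Finset.sum_congr rfl e2, Finset.sum_comm]
        apply Finset.sum_congr rfl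
        intro u _
        apply Finset.sum_congr rfl
        intro x _
        congr 1
        simp [adj_comm]
      have hsum2 : ∑ u ∈ Finset.univ \ T, (T.filter (fun x => G.Adj u x)).card ≤ (n - g) * 2 := by
        calc ∑ u ∈ Finset.univ \ T, (T.filter (fun x => G.Adj u x)).card
            ≤ ∑ _u ∈ Finset.univ \ T, 2 := Finset.sum_le_sum (fun u _ => hdeg2 u)
          _ = (n - g) * 2 := by
              rw [Finset.sum_const, smul_eq_mul, Finset.card_sdiff_of_subset (Finset.subset_univ T),
                hTcard, Finset.card_univ]
      have hfin : g * (k-2) ≤ (n-g)*2 := by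
        calc g * (k-2) ≤ _ := hsum1
          _ = _ := hswap
          _ ≤ (n-g)*2 := hsum2
      have hfin2 : g * (k-2) ≤ g * 2 := by
        calc g * (k-2) ≤ (n-g)*2 := hfin
          _ ≤ g * 2 := by
            apply Nat.mul_le_mul_right
            omega
      have := Nat.le_of_mul_le_mul_left hfin2 (show 0 < g by omega)
      omega
  exact ⟨by omega, hk4⟩
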